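/- If a decomposable and smooth arithmetic circuit AC(X) computes a factor f(X) (i.e., AC(x) = f(x) for all full instantiations x), then AC computes the marginals of f: for every subset Y of X and every instantiation y of Y, AC(y) = Σ_z f(y,z), where z ranges over instantiations of X \ Y. -/
import Mathlib


/-- An arithmetic circuit over variables `ι` with values `α`: leaves are indicator
variables `λ_{i,v}` or real parameters; internal nodes are sums or products. -/
inductive AC (ι α : Type) : Type where
  | ind (i : ι) (v : α)
  | param (θ : ℝ)
  | sum (l r : AC ι α)
  | prod (l r : AC ι α)

namespace AC

variable {ι α : Type} [Fintype ι] [DecidableEq ι] [Fintype α] [DecidableEq α]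

/-- Evaluate the circuit under a circuit input `Λ` assigning 0/1 to each indicator. -/
def eval (Λ : ι → α → Bool) : AC ι α → ℝ
  | ind i v => if Λ i v then 1 else 0
  | param θ => θ
  | sum l r => l.eval Λ + r.eval Λ
  | prod l r => l.eval Λ * r.eval Λ

/-- Evaluate the maximizer circuit (sum nodes replaced by max nodes). -/
def evalMax (Λ : ι → α → Bool) : AC ι α → ℝ
  | ind i v => if Λ i v then 1 else 0
  | param θ => θ
  | sum l r => max (l.evalMax Λ) (r.evalMax Λ)
  | prod l r => l.evalMax Λ * r.evalMax Λ

/-- The circuit input corresponding to a full instantiation `x`. -/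
def inputOf (x : ι → α) : ι → α → Bool := fun i v => decide (x i = v)

/-- The circuit input corresponding to a partial instantiation `y`:
an indicator is set to 1 iff its value is compatible with `y`. -/
def pinputOf (y : ι → Option α) : ι → α → Bool := fun i v =>
  match y i with
  | none => true
  | some w => decide (w = v)

/-- The value `AC(x)` of the circuit at a full instantiation `x`. -/
def evalAt (x : ι → α) (c : AC ι α) : ℝ := c.eval (inputOf x)

/-- The value `AC(y)` of the circuit at a partial instantiation `y`. -/
def evalP (y : ι → Option α) (c : AC ι α) : ℝ := c.eval (pinputOf y)

/-- Maximizer-circuit value at a full instantiation. -/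
def evalMaxAt (x : ι → α) (c : AC ι α) : ℝ := c.evalMax (inputOf x)

/-- Maximizer-circuit value at a partial instantiation. -/
def evalMaxP (y : ι → Option α) (c : AC ι α) : ℝ := c.evalMax (pinputOf y)

/-- `vars n`: variables with some indicator at or under the node. -/
def vars : AC ι α → Finset ι
  | ind i _ => {i}
  | param _ => ∅
  | sum l r => l.vars ∪ r.vars
  | prod l r => l.vars ∪ r.vars

/-- The multiset of parameters appearing in the circuit. -/
def params : AC ι α → Multiset ℝ
  | ind _ _ => 0
  | param θ => {θ}
  | sum l r => l.params + r.params
  | prod l r => l.params + r.params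

/-- Decomposability: children of every `*`-node have disjoint variable sets. -/
def Decomposable : AC ι α → Prop
  | ind _ _ => True
  | param _ => True
  | sum l r => l.Decomposable ∧ r.Decomposable
  | prod l r => Disjoint l.vars r.vars ∧ l.Decomposable ∧ r.Decomposable

/-- Smoothness: every child of a `+`-node mentions the same variables as the node. -/
def Smooth : AC ι α → Prop
  | ind _ _ => True
  | param _ => True
  | sum l r => l.vars = r.vars ∧ l.Smooth ∧ r.Smooth
  | prod l r => l.Smooth ∧ r.Smooth

/-- Determinism: under every full instantiation, every `+`-node has at most one
non-zero input. -/
def Deterministic : AC ι α → Prop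
  | ind _ _ => True
  | param _ => True
  | sum l r => (∀ x : ι → α, l.evalAt x = 0 ∨ r.evalAt x = 0) ∧
      l.Deterministic ∧ r.Deterministic
  | prod l r => l.Deterministic ∧ r.Deterministic

/-- A full instantiation `x` is compatible with a partial instantiation `y`. -/
def Compat (x : ι → α) (y : ι → Option α) : Prop :=
  ∀ i, y i = none ∨ y i = some (x i)

instance (x : ι → α) (y : ι → Option α) : Decidable (Compat x y) := by
  unfold Compat; infer_instance

/-- The graph of a full instantiation, i.e. its term `{(i, x i) | i}`. -/
def graphOf (x : ι → α) : Finset (ι × α) := Finset.univ.image fun i => (i, x i)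

/-- The marginal `Σ_{x ∼ y} f(x)` of a factor `f` at a partial instantiation `y`. -/
def margSum (f : (ι → α) → ℝ) (y : ι → Option α) : ℝ :=
  ∑ x : ι → α, if Compat x y then f x else 0

/-- The circuit computes the factor `f`. -/
def Computes (c : AC ι α) (f : (ι → α) → ℝ) : Prop := ∀ x, c.evalAt x = f x

/-- The circuit computes the marginals of the factor `f`. -/
def ComputesMarginals (c : AC ι α) (f : (ι → α) → ℝ) : Prop :=
  ∀ y : ι → Option α, c.evalP y = margSum f y

/-- The multiset of (term, coefficient) pairs of all complete subcircuits. -/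
def subs : AC ι α → Multiset (Finset (ι × α) × ℝ)
  | ind i v => {({(i, v)}, 1)}
  | param θ => {(∅, θ)}
  | sum l r => l.subs + r.subs
  | prod l r => l.subs.bind fun a => r.subs.map fun b => (a.1 ∪ b.1, a.2 * b.2)

/-- Complete subcircuits of a circuit: choose one child of each `+`-node and all
children of each `*`-node. -/
inductive Sub : AC ι α → Type where
  | ind (i : ι) (v : α) : Sub (AC.ind i v)
  | param (θ : ℝ) : Sub (AC.param θ)
  | sumL {l r : AC ι α} : Sub l → Sub (AC.sum l r)
  | sumR {l r : AC ι α} : Sub r → Sub (AC.sum l r)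
  | prod {l r : AC ι α} : Sub l → Sub r → Sub (AC.prod l r)

/-- The term of a complete subcircuit: the set of indicator values appearing in it. -/
def Sub.term : {c : AC ι α} → Sub c → Finset (ι × α)
  | _, .ind i v => {(i, v)}
  | _, .param _ => ∅
  | _, .sumL s => s.term
  | _, .sumR s => s.term
  | _, .prod s t => s.term ∪ t.term

/-- The coefficient of a complete subcircuit: the product of its parameters. -/
def Sub.coeff : {c : AC ι α} → Sub c → ℝ
  | _, .ind _ _ => 1
  | _, .param θ => θ
  | _, .sumL s => s.coeff
  | _, .sumR s => s.coeff
  | _, .prod s t => s.coeff * t.coeff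


/-! ### Auxiliary lemmas -/

lemma eval_congr' {c : AC ι α} {Λ₁ Λ₂ : ι → α → Bool}
    (h : ∀ i ∈ c.vars, ∀ v, Λ₁ i v = Λ₂ i v) : c.eval Λ₁ = c.eval Λ₂ := by
  induction c with
  | ind i v => simp only [eval]; rw [h i (by simp [vars]) v]
  | param θ => rfl
  | sum l r ihl ihr =>
      simp only [eval]
      rw [ihl fun i hi v => h i (by simp [vars, hi]) v,
          ihr fun i hi v => h i (by simp [vars, hi]) v]
  | prod l r ihl ihr =>
      simp only [eval]
      rw [ihl fun i hi v => h i (by simp [vars, hi]) v,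
          ihr fun i hi v => h i (by simp [vars, hi]) v]

lemma evalAt_congr' {c : AC ι α} {x x' : ι → α}
    (h : ∀ i ∈ c.vars, x i = x' i) : c.evalAt x = c.evalAt x' :=
  eval_congr' (fun i hi v => by simp [inputOf, h i hi])

/-- Self-inverse equivalence swapping the two coordinates outside `A`. -/
def mixEquiv (A : Finset ι) : ((ι → α) × (ι → α)) ≃ ((ι → α) × (ι → α)) where
  toFun p := (fun i => if i ∈ A then p.1 i else p.2 i,
              fun i => if i ∈ A then p.2 i else p.1 i)
  invFun p := (fun i => if i ∈ A then p.1 i else p.2 i,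
               fun i => if i ∈ A then p.2 i else p.1 i)
  left_inv p := by
    refine Prod.ext (funext fun i => ?_) (funext fun i => ?_) <;>
      by_cases h : i ∈ A <;> simp [h]
  right_inv p := by
    refine Prod.ext (funext fun i => ?_) (funext fun i => ?_) <;>
      by_cases h : i ∈ A <;> simp [h]

lemma key_lemma (x₀ : ι → α) (y : ι → Option α) :
    ∀ c : AC ι α, c.Decomposable → c.Smooth →
      c.evalP y = ∑ x : ι → α,
        if (∀ i ∈ c.vars, y i = none ∨ y i = some (x i)) ∧ (∀ i ∉ c.vars, x i = x₀ i)
        then c.evalAt x else 0 := by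
  intro c
  induction c with
  | ind i v =>
      intro _ _
      have hterm : ∀ x : ι → α,
          (if (∀ j ∈ (AC.ind i v : AC ι α).vars, y j = none ∨ y j = some (x j)) ∧
              (∀ j ∉ (AC.ind i v : AC ι α).vars, x j = x₀ j)
           then (AC.ind i v : AC ι α).evalAt x else 0)
          = if x = Function.update x₀ i v then
              (if (y i = none ∨ y i = some v) then (1:ℝ) else 0) else 0 := by
        intro x
        by_cases hx : x = Function.update x₀ i v
        · subst hx
          by_cases hq : y i = none ∨ y i = some v
          · rw [if_pos, if_pos rfl, if_pos hq]
            · simp [evalAt, eval, inputOf]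
            · constructor
              · intro j hj
                simp only [vars, Finset.mem_singleton] at hj
                subst hj
                simpa using hq
              · intro j hj
                simp only [vars, Finset.mem_singleton] at hj
                simp [Function.update, hj]
          · rw [if_neg, if_pos rfl, if_neg hq]
            intro ⟨h1, _⟩
            exact hq (by simpa using h1 i (by simp [vars]))
        · rw [if_neg hx]
          by_cases hc : (∀ j ∈ (AC.ind i v : AC ι α).vars, y j = none ∨ y j = some (x j)) ∧
              (∀ j ∉ (AC.ind i v : AC ι α).vars, x j = x₀ j)
          · rw [if_pos hc]
            have hxi : x i ≠ v := by
              intro hxi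
              apply hx
              funext j
              by_cases hj : j = i
              · subst hj; simp [Function.update, hxi]
              · simp [Function.update, hj]
                exact hc.2 j (by simp [vars, hj])
            simp [evalAt, eval, inputOf, hxi]
          · rw [if_neg hc]
      rw [Finset.sum_congr rfl (fun x _ => hterm x), Finset.sum_ite_eq' Finset.univ]
      simp only [Finset.mem_univ, if_true]
      have hpi : pinputOf y i v = decide (y i = none ∨ y i = some v) := by
        unfold pinputOf
        split
        next h => simp [h]
        next w h => by_cases hw : w = v <;> simp [h, hw]
      simp only [evalP, eval, hpi]
      by_cases h : (y i = none ∨ y i = some v) <;> simp [h]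
  | param θ =>
      intro _ _
      have hterm : ∀ x : ι → α,
          (if (∀ j ∈ (AC.param θ : AC ι α).vars, y j = none ∨ y j = some (x j)) ∧
              (∀ j ∉ (AC.param θ : AC ι α).vars, x j = x₀ j)
           then (AC.param θ : AC ι α).evalAt x else 0)
          = if x = x₀ then θ else 0 := by
        intro x
        by_cases hx : x = x₀
        · subst hx
          rw [if_pos, if_pos rfl]
          · rfl
          · exact ⟨fun j hj => by simp [vars] at hj, fun j _ => rfl⟩
        · rw [if_neg, if_neg hx]
          intro ⟨_, h2⟩
          exact hx (funext fun j => h2 j (by simp [vars]))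
      rw [Finset.sum_congr rfl (fun x _ => hterm x), Finset.sum_ite_eq' Finset.univ]
      simp [evalP, eval]
  | sum l r ihl ihr =>
      intro hd hs
      have hlr : l.vars = r.vars := hs.1
      have hvars : (AC.sum l r).vars = l.vars := by
        simp [vars, hlr]
      have hsplit : (AC.sum l r).evalP y = l.evalP y + r.evalP y := rfl
      rw [hsplit, ihl hd.1 hs.2.1, ihr hd.2 hs.2.2, ← Finset.sum_add_distrib]
      refine Finset.sum_congr rfl fun x _ => ?_
      simp only [hvars, evalAt, eval, ← hlr]
      split <;> simp
  | prod l r ihl ihr =>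
      intro hd hs
      have hdisj : Disjoint l.vars r.vars := hd.1
      have hvars : (AC.prod l r).vars = l.vars ∪ r.vars := rfl
      have hsplit : (AC.prod l r).evalP y = l.evalP y * r.evalP y := rfl
      rw [hsplit, ihl hd.2.1 hs.1, ihr hd.2.2 hs.2, Finset.sum_mul_sum]
      rw [← Fintype.sum_prod_type']
      -- reindex by the self-inverse equivalence swapping coordinates outside l.vars
      rw [← Equiv.sum_comp (mixEquiv (ι := ι) (α := α) l.vars)]
      rw [Fintype.sum_prod_type]
      have hterm : ∀ x w : ι → α,
          ((if (∀ i ∈ l.vars, y i = none ∨ y i = some ((mixEquiv l.vars (x, w)).1 i)) ∧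
               (∀ i ∉ l.vars, (mixEquiv l.vars (x, w)).1 i = x₀ i)
            then l.evalAt (mixEquiv l.vars (x, w)).1 else 0) *
           (if (∀ i ∈ r.vars, y i = none ∨ y i = some ((mixEquiv l.vars (x, w)).2 i)) ∧
               (∀ i ∉ r.vars, (mixEquiv l.vars (x, w)).2 i = x₀ i)
            then r.evalAt (mixEquiv l.vars (x, w)).2 else 0))
          = if w = x₀ then
              (if (∀ i ∈ (AC.prod l r).vars, y i = none ∨ y i = some (x i)) ∧
                  (∀ i ∉ (AC.prod l r).vars, x i = x₀ i)
               then (AC.prod l r).evalAt x else 0) else 0 := by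
        intro x w
        have hx1 : ∀ i, (mixEquiv l.vars (x, w)).1 i = if i ∈ l.vars then x i else w i :=
          fun i => rfl
        have hx2 : ∀ i, (mixEquiv l.vars (x, w)).2 i = if i ∈ l.vars then w i else x i :=
          fun i => rfl
        have hPeval : (AC.prod l r).evalAt x = l.evalAt x * r.evalAt x := rfl
        by_cases hC : ((∀ i ∈ l.vars, y i = none ∨ y i = some ((mixEquiv l.vars (x, w)).1 i)) ∧
               (∀ i ∉ l.vars, (mixEquiv l.vars (x, w)).1 i = x₀ i)) ∧
            ((∀ i ∈ r.vars, y i = none ∨ y i = some ((mixEquiv l.vars (x, w)).2 i)) ∧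
               (∀ i ∉ r.vars, (mixEquiv l.vars (x, w)).2 i = x₀ i))
        · obtain ⟨⟨h1a, h1b⟩, ⟨h2a, h2b⟩⟩ := hC
          have hw : w = x₀ := by
            funext i
            by_cases hA : i ∈ l.vars
            · have hB : i ∉ r.vars := Finset.disjoint_left.mp hdisj hA
              have h := h2b i hB
              rwa [hx2, if_pos hA] at h
            · have h := h1b i hA
              rwa [hx1, if_neg hA] at h
          have hCx : (∀ i ∈ (AC.prod l r).vars, y i = none ∨ y i = some (x i)) ∧
              (∀ i ∉ (AC.prod l r).vars, x i = x₀ i) := by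
            rw [hvars]
            constructor
            · intro i hi
              rcases Finset.mem_union.mp hi with hA | hB
              · have h := h1a i hA
                rwa [hx1, if_pos hA] at h
              · have hA : i ∉ l.vars := Finset.disjoint_right.mp hdisj hB
                have h := h2a i hB
                rwa [hx2, if_neg hA] at h
            · intro i hi
              simp only [Finset.mem_union, not_or] at hi
              have h := h2b i hi.2
              rwa [hx2, if_neg hi.1] at h
          have hel : l.evalAt (mixEquiv l.vars (x, w)).1 = l.evalAt x :=
            evalAt_congr' fun i hi => by rw [hx1, if_pos hi]
          have her : r.evalAt (mixEquiv l.vars (x, w)).2 = r.evalAt x :=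
            evalAt_congr' fun i hi => by
              rw [hx2, if_neg (Finset.disjoint_right.mp hdisj hi)]
          rw [if_pos ⟨h1a, h1b⟩, if_pos ⟨h2a, h2b⟩, if_pos hw, if_pos hCx, hel, her, hPeval]
        · have hL : ((if (∀ i ∈ l.vars, y i = none ∨ y i = some ((mixEquiv l.vars (x, w)).1 i)) ∧
               (∀ i ∉ l.vars, (mixEquiv l.vars (x, w)).1 i = x₀ i)
            then l.evalAt (mixEquiv l.vars (x, w)).1 else 0) *
           (if (∀ i ∈ r.vars, y i = none ∨ y i = some ((mixEquiv l.vars (x, w)).2 i)) ∧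
               (∀ i ∉ r.vars, (mixEquiv l.vars (x, w)).2 i = x₀ i)
            then r.evalAt (mixEquiv l.vars (x, w)).2 else 0)) = 0 := by
            rcases not_and_or.mp hC with h | h
            · rw [if_neg h, zero_mul]
            · rw [if_neg h, mul_zero]
          rw [hL]
          by_cases hw : w = x₀
          · subst hw
            rw [if_pos rfl, if_neg]
            intro hCx
            apply hC
            rw [hvars] at hCx
            refine ⟨⟨fun i hi => ?_, fun i hi => ?_⟩, ⟨fun i hi => ?_, fun i hi => ?_⟩⟩
            · rw [hx1, if_pos hi]
              exact hCx.1 i (Finset.mem_union_left _ hi)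
            · rw [hx1, if_neg hi]
            · rw [hx2, if_neg (Finset.disjoint_right.mp hdisj hi)]
              exact hCx.1 i (Finset.mem_union_right _ hi)
            · by_cases hA : i ∈ l.vars
              · rw [hx2, if_pos hA]
              · rw [hx2, if_neg hA]
                exact hCx.2 i (by simp [Finset.mem_union, hA, hi])
          · rw [if_neg hw]
      rw [Finset.sum_congr rfl fun x _ => Finset.sum_congr rfl fun w _ => hterm x w]
      refine Finset.sum_congr rfl fun x _ => ?_
      rw [Finset.sum_ite_eq' Finset.univ]
      simp

lemma vars_empty_of_isEmpty [IsEmpty α] (c : AC ι α) : c.vars = ∅ := by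
  induction c with
  | ind i v => exact (IsEmpty.false v).elim
  | param θ => rfl
  | sum l r ihl ihr => simp [vars, ihl, ihr]
  | prod l r ihl ihr => simp [vars, ihl, ihr]

end AC


/-- If a decomposable and smooth circuit computes a factor, then it computes the
factor's marginals: at every partial instantiation `y`, its value is `Σ_{x ∼ y} f(x)`. -/
theorem stmt3 {ι α : Type} [Fintype ι] [DecidableEq ι] [Fintype α] [DecidableEq α]
    (c : AC ι α) (hd : c.Decomposable) (hs : c.Smooth) (hv : c.vars = Finset.univ)
    (f : (ι → α) → ℝ) (hf : ∀ x, 0 ≤ f x) (hc : c.Computes f) :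
    c.ComputesMarginals f := by
  intro y
  have hne : Nonempty (ι → α) := by
    rcases isEmpty_or_nonempty α with hα | hα
    · have h0 : c.vars = ∅ := AC.vars_empty_of_isEmpty c
      rw [hv] at h0
      have : IsEmpty ι := Finset.univ_eq_empty_iff.mp h0
      exact ⟨fun i => isEmptyElim i⟩
    · exact ⟨fun _ => Classical.arbitrary α⟩
  obtain ⟨x₀⟩ := hne
  rw [AC.key_lemma x₀ y c hd hs]
  unfold AC.margSum
  refine Finset.sum_congr rfl fun x _ => ?_
  have hiff : ((∀ i ∈ c.vars, y i = none ∨ y i = some (x i)) ∧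
      (∀ i ∉ c.vars, x i = x₀ i)) ↔ AC.Compat x y := by
    rw [hv]
    constructor
    · exact fun h i => h.1 i (Finset.mem_univ i)
    · exact fun h => ⟨fun i _ => h i, fun i hi => absurd (Finset.mem_univ i) hi⟩
  by_cases h : AC.Compat x y
  · rw [if_pos (hiff.mpr h), if_pos h, hc x]
  · rw [if_neg (fun hh => h (hiff.mp hh)), if_neg h]
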